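/- Let d ≥ 1, n₁,...,n_d ≥ 2, and m₁, m₂ integers with d ≤ m₁ ≤ m₂ ≤ -d + Σ n_i. Define B(d,m₁,m₂) = {(i₁,...,i_d) ∈ [n₁-1]×...×[n_d-1] : m₁ ≤ i₁+...+i_d ≤ m₂}. If m₂ - m₁ ≥ d, or m₁ = d, or m₂ = Σn_i - d, then B(d,m₁,m₂) is grid-connected: between any two of its elements there is a path in B changing one coordinate at a time by one unit. -/

import Mathlib

/-- Grid adjacency in `ℤ^d`-like grids: two tuples are adjacent iff they differ in
exactly one coordinate, by exactly one unit. -/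
def gridAdjTuple {d : ℕ} (a b : Fin d → ℕ) : Prop :=
  ∃ i, (b i = a i + 1 ∨ a i = b i + 1) ∧ ∀ j, j ≠ i → a j = b j

section Aux

variable {d : ℕ} (n : Fin d → ℕ) (m₁ m₂ : ℕ)

def slabMem (x : Fin d → ℕ) : Prop :=
  (∀ i, 1 ≤ x i ∧ x i ≤ n i - 1) ∧ m₁ ≤ ∑ i, x i ∧ ∑ i, x i ≤ m₂

def slabRel (a b : Fin d → ℕ) : Prop :=
  slabMem n m₁ m₂ a ∧ slabMem n m₁ m₂ b ∧ gridAdjTuple a b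

lemma sum_update_add (x : Fin d → ℕ) (i : Fin d) (v : ℕ) :
    ∑ j, Function.update x i v j + x i = ∑ j, x j + v := by
  rw [Finset.sum_update_of_mem (Finset.mem_univ i),
    ← Finset.add_sum_erase _ x (Finset.mem_univ i), Finset.sdiff_singleton_eq_erase]
  ring

lemma slabRel_symm : Symmetric (slabRel n m₁ m₂) := by
  rintro a b ⟨ha, hb, i, hstep, heq⟩
  exact ⟨hb, ha, i, hstep.symm, fun j hj => (heq j hj).symm⟩

lemma descend (hd : 1 ≤ d) (h1 : d ≤ m₁) :
    ∀ k (x : Fin d → ℕ), slabMem n m₁ m₂ x → ∑ i, x i = k →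
      ∃ x', slabMem n m₁ m₂ x' ∧ (∑ i, x' i) = m₁ ∧
        Relation.ReflTransGen (slabRel n m₁ m₂) x x' := by
  intro k
  induction k using Nat.strong_induction_on with
  | _ k ih =>
  intro x hx hk
  rcases eq_or_lt_of_le hx.2.1 with h | h
  · exact ⟨x, hx, hk ▸ h.symm, .refl⟩
  · have hex : ∃ i, 2 ≤ x i := by
      by_contra hc
      push_neg at hc
      have hle : ∑ i, x i ≤ ∑ _i : Fin d, 1 :=
        Finset.sum_le_sum fun i _ => by have := hc i; omega
      simp at hle
      omega
    obtain ⟨i, hi⟩ := hex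
    set x' := Function.update x i (x i - 1) with hx'
    have hsum : ∑ j, x' j + x i = ∑ j, x j + (x i - 1) := sum_update_add x i _
    have hsum' : ∑ j, x' j = k - 1 := by omega
    have hxs1 := hx.2.1
    have hxs2 := hx.2.2
    have hmem : slabMem n m₁ m₂ x' := by
      refine ⟨fun j => ?_, by omega, by omega⟩
      by_cases hji : j = i
      · subst hji
        simp only [hx', Function.update_self]
        have := (hx.1 j).2
        omega
      · simp only [hx', Function.update_of_ne hji]
        exact hx.1 j
    have hadj : gridAdjTuple x x' := by
      refine ⟨i, Or.inr ?_, fun j hj => (Function.update_of_ne hj _ _).symm⟩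
      simp only [hx', Function.update_self]
      omega
    obtain ⟨x'', h1', h2', h3'⟩ := ih (k - 1) (by omega) x' hmem hsum'
    exact ⟨x'', h1', h2', .head ⟨hx, hmem, hadj⟩ h3'⟩

lemma lateral (hm : m₁ < m₂) :
    ∀ D (x y : Fin d → ℕ), slabMem n m₁ m₂ x → slabMem n m₁ m₂ y →
      ∑ i, x i = m₁ → ∑ i, y i = m₁ → ∑ i, Nat.dist (x i) (y i) = D →
      Relation.ReflTransGen (slabRel n m₁ m₂) x y := by
  intro D
  induction D using Nat.strong_induction_on with
  | _ D ih =>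
  intro x y hx hy hsx hsy hD
  by_cases hxy : x = y
  · exact hxy ▸ .refl
  · have hne : ∃ i, x i ≠ y i := by
      by_contra hc; push_neg at hc; exact hxy (funext hc)
    have hi : ∃ i, x i < y i := by
      by_contra hc; push_neg at hc
      obtain ⟨i0, hi0⟩ := hne
      have : ∑ i, y i < ∑ i, x i :=
        Finset.sum_lt_sum (fun i _ => hc i)
          ⟨i0, Finset.mem_univ i0, lt_of_le_of_ne (hc i0) (Ne.symm hi0)⟩
      omega
    have hj : ∃ j, y j < x j := by
      by_contra hc; push_neg at hc
      obtain ⟨i0, hi0⟩ := hne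
      have : ∑ i, x i < ∑ i, y i :=
        Finset.sum_lt_sum (fun i _ => hc i)
          ⟨i0, Finset.mem_univ i0, lt_of_le_of_ne (hc i0) hi0⟩
      omega
    obtain ⟨i, hilt⟩ := hi
    obtain ⟨j, hjlt⟩ := hj
    have hij : i ≠ j := by intro h; subst h; omega
    set z1 := Function.update x i (x i + 1) with hz1
    set z := Function.update z1 j (x j - 1) with hz
    have hz1j : z1 j = x j := Function.update_of_ne (Ne.symm hij) _ _
    have hzi : z i = x i + 1 := by
      rw [hz, Function.update_of_ne hij, hz1, Function.update_self]
    have hzj : z j = x j - 1 := Function.update_self _ _ _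
    have hs1 : ∑ k, z1 k + x i = ∑ k, x k + (x i + 1) := sum_update_add x i _
    have hs1' : ∑ k, z1 k = m₁ + 1 := by omega
    have hs2 : ∑ k, z k + z1 j = ∑ k, z1 k + (x j - 1) := sum_update_add z1 j _
    have hyj1 : 1 ≤ y j := (hy.1 j).1
    have hs2' : ∑ k, z k = m₁ := by rw [hz1j] at hs2; omega
    have hxiub : x i + 1 ≤ n i - 1 := by have := (hy.1 i).2; omega
    have hm1 : slabMem n m₁ m₂ z1 := by
      refine ⟨fun k => ?_, by omega, by omega⟩
      by_cases hki : k = i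
      · subst hki; simp only [hz1, Function.update_self]; omega
      · simp only [hz1, Function.update_of_ne hki]; exact hx.1 k
    have hm2 : slabMem n m₁ m₂ z := by
      refine ⟨fun k => ?_, by omega, by omega⟩
      by_cases hkj : k = j
      · subst hkj
        simp only [hz, Function.update_self]
        have := (hx.1 k).2
        omega
      · simp only [hz, Function.update_of_ne hkj]
        by_cases hki : k = i
        · subst hki; simp only [hz1, Function.update_self]; omega
        · simp only [hz1, Function.update_of_ne hki]; exact hx.1 k
    have hadj1 : gridAdjTuple x z1 := by
      refine ⟨i, Or.inl ?_, fun k hk => (Function.update_of_ne hk _ _).symm⟩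
      simp [hz1]
    have hadj2 : gridAdjTuple z1 z := by
      refine ⟨j, Or.inr ?_, fun k hk => (Function.update_of_ne hk _ _).symm⟩
      rw [hz1j, hzj]
      omega
    have hji : j ∈ Finset.univ.erase i :=
      Finset.mem_erase.2 ⟨Ne.symm hij, Finset.mem_univ j⟩
    have key : ∀ w : Fin d → ℕ, ∑ k, Nat.dist (w k) (y k)
        = Nat.dist (w i) (y i) + (Nat.dist (w j) (y j)
          + ∑ k ∈ (Finset.univ.erase i).erase j, Nat.dist (w k) (y k)) := by
      intro w
      rw [← Finset.add_sum_erase _ _ (Finset.mem_univ i), ← Finset.add_sum_erase _ _ hji]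
    have e2 : ∑ k ∈ (Finset.univ.erase i).erase j, Nat.dist (z k) (y k)
        = ∑ k ∈ (Finset.univ.erase i).erase j, Nat.dist (x k) (y k) := by
      refine Finset.sum_congr rfl fun k hk => ?_
      have hk1 : k ≠ j := (Finset.mem_erase.1 hk).1
      have hk2 : k ≠ i := (Finset.mem_erase.1 ((Finset.mem_erase.1 hk).2)).1
      rw [hz, Function.update_of_ne hk1, hz1, Function.update_of_ne hk2]
    have hdist : ∑ k, Nat.dist (z k) (y k) + 2 = D := by
      rw [key z, e2, hzi, hzj, ← hD, key x]
      simp only [Nat.dist]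
      omega
    exact .head ⟨hx, hm1, hadj1⟩ (.head ⟨hm1, hm2, hadj2⟩
      (ih (D - 2) (by omega) z y hm2 hy hs2' hsy (by omega)))

lemma sum_n_eq (hn : ∀ i, 2 ≤ n i) : ∑ i, n i = ∑ i, (n i - 1) + d := by
  calc ∑ i, n i = ∑ i, ((n i - 1) + 1) :=
        Finset.sum_congr rfl fun i _ => by have := hn i; omega
    _ = ∑ i, (n i - 1) + ∑ _i : Fin d, 1 := Finset.sum_add_distrib
    _ = ∑ i, (n i - 1) + d := by simp

end Aux

/-- The diagonal slab `B(d,m₁,m₂) = {x ∈ [n₁-1]×⋯×[n_d-1] : m₁ ≤ ∑ xᵢ ≤ m₂}` is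
grid-connected provided `m₂ - m₁ ≥ d`, or `m₁ = d`, or `m₂ = ∑ nᵢ - d`. -/
theorem stmt_13 (d : ℕ) (hd : 1 ≤ d) (n : Fin d → ℕ) (hn : ∀ i, 2 ≤ n i)
    (m₁ m₂ : ℕ) (h1 : d ≤ m₁) (h12 : m₁ ≤ m₂) (h2 : m₂ ≤ (∑ i, n i) - d)
    (hcase : d ≤ m₂ - m₁ ∨ m₁ = d ∨ m₂ = (∑ i, n i) - d) :
    ∀ x y : Fin d → ℕ,
      ((∀ i, 1 ≤ x i ∧ x i ≤ n i - 1) ∧ m₁ ≤ ∑ i, x i ∧ ∑ i, x i ≤ m₂) →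
      ((∀ i, 1 ≤ y i ∧ y i ≤ n i - 1) ∧ m₁ ≤ ∑ i, y i ∧ ∑ i, y i ≤ m₂) →
      Relation.ReflTransGen
        (fun a b =>
          ((∀ i, 1 ≤ a i ∧ a i ≤ n i - 1) ∧ m₁ ≤ ∑ i, a i ∧ ∑ i, a i ≤ m₂) ∧
          ((∀ i, 1 ≤ b i ∧ b i ≤ n i - 1) ∧ m₁ ≤ ∑ i, b i ∧ ∑ i, b i ≤ m₂) ∧
          gridAdjTuple a b)
        x y := by
  intro x y hx hy
  show Relation.ReflTransGen (slabRel n m₁ m₂) x y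
  rcases eq_or_lt_of_le h12 with heq | hlt
  · -- m₁ = m₂ : the slab is a single point
    have hxy : x = y := by
      rcases hcase with hc | hc | hc
      · omega
      · -- m₁ = d : only the all-ones point
        have hone : ∀ w : Fin d → ℕ, slabMem n m₁ m₂ w → ∀ i, w i = 1 := by
          intro w hw
          have hs : ∑ i, w i = ∑ _i : Fin d, 1 := by
            have h1' := hw.2.1
            have h2' := hw.2.2
            simp only [Finset.sum_const, Finset.card_univ, Fintype.card_fin, smul_eq_mul,
              mul_one]
            omega
          have := (Finset.sum_eq_sum_iff_of_le (fun i _ => (hw.1 i).1)).1 hs.symm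
          exact fun i => (this i (Finset.mem_univ i)).symm
        funext i
        rw [hone x hx i, hone y hy i]
      · -- m₂ = ∑ n - d : only the all-maximal point
        have hsn := sum_n_eq n hn
        have htop : ∀ w : Fin d → ℕ, slabMem n m₁ m₂ w → ∀ i, w i = n i - 1 := by
          intro w hw
          have hs : ∑ i, w i = ∑ i, (n i - 1) := by
            have h1' := hw.2.1
            have h2' := hw.2.2
            omega
          have := (Finset.sum_eq_sum_iff_of_le (fun i _ => (hw.1 i).2)).1 hs
          exact fun i => this i (Finset.mem_univ i)
        funext i
        rw [htop x hx i, htop y hy i]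
    exact hxy ▸ .refl
  · obtain ⟨x', hx', hsx', px⟩ := descend n m₁ m₂ hd h1 _ x hx rfl
    obtain ⟨y', hy', hsy', py⟩ := descend n m₁ m₂ hd h1 _ y hy rfl
    have mid := lateral n m₁ m₂ hlt _ x' y' hx' hy' hsx' hsy' rfl
    exact (px.trans mid).trans
      (haveI : Std.Symm (slabRel n m₁ m₂) := ⟨fun _ _ h => slabRel_symm n m₁ m₂ h⟩;
        Relation.ReflTransGen.symmetric.symm _ _ py)
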